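/- In a housing market H with strict partial order preferences, let U denote the set of undominated arcs of the underlying digraph D^H. If X is an allocation in the strong core of H and S is an absorbing set of the digraph (N, U), then X restricted to S, namely X ∩ (S × S), is an allocation in the submarket H|_S contained in U, and X ∖ (S × S) is an allocation in the strong core of H|_{N∖S}. -/

import Mathlib

/-- A housing market: each agent `a` has a strict partial order `pref a`
(`pref a b c` means agent `a` strictly prefers house `b` to house `c`). -/
structure Market (N : Type) where
  pref : N → N → N → Prop
  irrefl : ∀ a b, ¬ pref a b b
  asymm : ∀ a b c, pref a b c → ¬ pref a c b
  trans : ∀ a b c d, pref a b c → pref a c d → pref a b d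

namespace Market

variable {N : Type}

/-- `b` is acceptable to `a`: `b ⪰_a a`, i.e. not `a ≻_a b`. -/
def acceptable (H : Market N) (a b : N) : Prop := ¬ H.pref a a b

/-- Arcs of the underlying digraph `D^H`. -/
def E (H : Market N) : Set (N × N) := {e | H.acceptable e.1 e.2}

/-- Undominated arcs of `D^H`. -/
def undominated (H : Market N) : Set (N × N) :=
  {e | e ∈ H.E ∧ ∀ b', H.acceptable e.1 b' → ¬ H.pref e.1 b' e.2}

/-- A full allocation, given as a function assigning each agent its house. -/
def IsAllocation (H : Market N) (X : N → N) : Prop :=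
  Function.Bijective X ∧ ∀ a, H.acceptable a (X a)

/-- A cycle of length `k ≥ 1` with all arcs in the arc set `A`. -/
def IsCycleIn (A : Set (N × N)) (k : ℕ) (c : ZMod k → N) : Prop :=
  0 < k ∧ Function.Injective c ∧ ∀ i, (c i, c (i + 1)) ∈ A

/-- `E_{[⪰X]}`: arcs `(a,b)` with `b ⪰_a X(a)`. -/
def weakImprove (H : Market N) (X : N → N) : Set (N × N) :=
  {e | e ∈ H.E ∧ ¬ H.pref e.1 (X e.1) e.2}

/-- `E_{[≻X]}`: arcs `(a,b)` with `b ≻_a X(a)`. -/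
def strictImprove (H : Market N) (X : N → N) : Set (N × N) :=
  {e | e ∈ H.E ∧ H.pref e.1 e.2 (X e.1)}

/-- A (weakly) blocking cycle for `X`. -/
def Blocks (H : Market N) (X : N → N) (k : ℕ) (c : ZMod k → N) : Prop :=
  IsCycleIn H.E k c ∧
  (∀ i, ¬ H.pref (c i) (X (c i)) (c (i + 1))) ∧
  (∃ i, H.pref (c i) (c (i + 1)) (X (c i)))

/-- The strong core: allocations admitting no blocking cycle. -/
def InStrongCore (H : Market N) (X : N → N) : Prop :=
  H.IsAllocation X ∧ ¬ ∃ k c, H.Blocks X k c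

/-- A strictly blocking cycle for `X`. -/
def StrictBlocks (H : Market N) (X : N → N) (k : ℕ) (c : ZMod k → N) : Prop :=
  IsCycleIn H.E k c ∧ ∀ i, H.pref (c i) (c (i + 1)) (X (c i))

/-- The core: allocations admitting no strictly blocking cycle. -/
def InCore (H : Market N) (X : N → N) : Prop :=
  H.IsAllocation X ∧ ¬ ∃ k c, H.StrictBlocks X k c

/-- An allocation of the submarket `H|_S`, given as a set of arcs among agents of `S`. -/
def IsAllocationOn (H : Market N) (S : Set N) (X : Set (N × N)) : Prop :=
  X ⊆ H.E ∧ (∀ e ∈ X, e.1 ∈ S ∧ e.2 ∈ S) ∧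
  (∀ a ∈ S, ∃! b, (a, b) ∈ X) ∧ (∀ b ∈ S, ∃! a, (a, b) ∈ X)

/-- A blocking cycle for the arc set `X` within the submarket `H|_S`. -/
def BlocksOn (H : Market N) (S : Set N) (X : Set (N × N)) (k : ℕ) (c : ZMod k → N) : Prop :=
  IsCycleIn H.E k c ∧ (∀ i, c i ∈ S) ∧
  (∀ i b, (c i, b) ∈ X → ¬ H.pref (c i) b (c (i + 1))) ∧
  (∃ i b, (c i, b) ∈ X ∧ H.pref (c i) (c (i + 1)) b)

/-- Membership in the strong core of the submarket `H|_S`. -/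
def InStrongCoreOn (H : Market N) (S : Set N) (X : Set (N × N)) : Prop :=
  H.IsAllocationOn S X ∧ ¬ ∃ k c, H.BlocksOn S X k c

end Market

/-- The arcs of the allocation `X` whose tails lie in `S`. -/
def graphRestrict {N : Type} (X : N → N) (S : Set N) : Set (N × N) :=
  {e | e.1 ∈ S ∧ e.2 = X e.1}

/-- Reachability in the digraph given by arc set `A`. -/
def reach {N : Type} (A : Set (N × N)) : N → N → Prop :=
  Relation.ReflTransGen (fun u v => (u, v) ∈ A)

/-- A strongly connected component of the digraph given by arc set `A`. -/
def IsSCC {N : Type} (A : Set (N × N)) (S : Set N) : Prop :=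
  S.Nonempty ∧ (∀ u ∈ S, ∀ v ∈ S, reach A u v) ∧
  (∀ u ∈ S, ∀ v, reach A u v → reach A v u → v ∈ S)

/-- An absorbing set: a strongly connected component not left by any arc. -/
def IsAbsorbing {N : Type} (A : Set (N × N)) (S : Set N) : Prop :=
  IsSCC A S ∧ ∀ e ∈ A, e.1 ∈ S → e.2 ∈ S


section Aux

open List

/-- Extract a duplicate-free path (as a list) from reflexive-transitive reachability. -/
lemma nodup_path {α : Type} {r : α → α → Prop} {a b : α}
    (h : Relation.ReflTransGen r a b) :
    a ≠ b → ∃ l : List α, List.Chain' r (a :: l ++ [b]) ∧ (a :: l ++ [b]).Nodup := by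
  induction h using Relation.ReflTransGen.head_induction_on with
  | refl => exact fun h => absurd rfl h
  | @head a' c' hac hcb ih =>
    intro hab
    by_cases hcb' : c' = b
    · subst hcb'
      exact ⟨[], by simpa [List.Chain', List.isChain_pair] using hac, by simp [hab]⟩
    · obtain ⟨l, hch, hnd⟩ := ih hcb'
      by_cases hal : a' ∈ c' :: l
      · obtain ⟨s, t, hst⟩ := List.append_of_mem hal
        have hdec : (c' :: l) ++ [b] = s ++ (a' :: t ++ [b]) := by
          rw [hst]; simp
        refine ⟨t, ?_, ?_⟩
        · exact List.IsChain.suffix hch ⟨s, hdec.symm⟩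
        · have : ((a' :: t ++ [b])).Sublist ((c' :: l) ++ [b]) := by
            rw [hdec]; exact List.sublist_append_right _ _
          exact hnd.sublist this
      · refine ⟨c' :: l, ?_, ?_⟩
        · rw [List.cons_append, List.Chain', List.isChain_cons]
          exact ⟨fun y hy => by simp at hy; rwa [← hy], hch⟩
        · rw [List.cons_append, List.nodup_cons]
          refine ⟨?_, hnd⟩
          simp only [List.mem_append, List.mem_singleton]
          rintro (h1 | h2)
          · exact hal h1
          · exact hab h2

/-- From a duplicate-free cyclically-closed list, build an injective cycle function
indexed by `ZMod`. -/
lemma zmod_cycle {N : Type} (A : Set (N × N)) (L : List N) (hk : 2 ≤ L.length)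
    (hnd : L.Nodup)
    (harc : List.Chain' (fun u v => (u, v) ∈ A)
      (L ++ [L.head (by intro h; rw [h] at hk; simp at hk)])) :
    ∃ k, ∃ c : ZMod k → N, 0 < k ∧ Function.Injective c ∧
      (∀ i, (c i, c (i + 1)) ∈ A) ∧ c 0 = L[0]'(by omega) ∧ c 1 = L[1]'(by omega) := by
  have h0 : L ≠ [] := by intro h; rw [h] at hk; simp at hk
  set k := L.length with hkdef
  have hk0 : 0 < k := by omega
  haveI : NeZero k := ⟨by omega⟩
  refine ⟨k, fun i : ZMod k => L[i.val]'(ZMod.val_lt i), hk0, ?_, ?_, ?_, ?_⟩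
  · intro i j hij
    apply ZMod.val_injective
    have hget := List.nodup_iff_injective_get.mp hnd
    have h2 : (⟨i.val, ZMod.val_lt i⟩ : Fin L.length) = ⟨j.val, ZMod.val_lt j⟩ :=
      hget (by simpa [List.get_eq_getElem] using hij)
    exact congrArg Fin.val h2
  · -- arc condition
    have hM : ∀ (i : ℕ) (h : i < k), (L[i], L[(i+1) % k]'(Nat.mod_lt _ hk0)) ∈ A := by
      intro i hi
      have hlen : (L ++ [L.head h0]).length = k + 1 := by simp [hkdef]
      have := List.isChain_iff_getElem.mp harc i (by omega)
      have h1 : (L ++ [L.head h0]).get ⟨i, by omega⟩ = L[i] := by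
        simp [List.getElem_append_left, hi, show i < L.length from hi]
      have h2 : (L ++ [L.head h0]).get ⟨i + 1, by omega⟩ = L[(i+1) % k]'(Nat.mod_lt _ hk0) := by
        rcases Nat.lt_or_ge (i+1) k with h | h
        · have : (i+1) % k = i + 1 := Nat.mod_eq_of_lt h
          simp only [List.get_eq_getElem]
          rw [List.getElem_append_left h]
          congr 1
          omega
        · have hik : i + 1 = k := by omega
          have : (i+1) % k = 0 := by rw [hik, Nat.mod_self]
          simp only [List.get_eq_getElem]
          rw [List.getElem_append_right (by omega)]
          simp only [hik]
          simp [List.head_eq_getElem, this]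
      simp only [List.get_eq_getElem] at h1 h2
      rw [h1, h2] at this
      exact this
    intro i
    have hmod := Nat.add_mod i.val 1 k
    rw [Nat.mod_eq_of_lt (ZMod.val_lt i)] at hmod
    have hval : (i + 1).val = (i.val + 1) % k := by
      rw [ZMod.val_add, ZMod.val_one_eq_one_mod, ← hmod]
    have hA := hM i.val (ZMod.val_lt i)
    simp only [hval]
    exact hA
  · simp [ZMod.val_zero]
  · have : (1 : ZMod k).val = 1 % k := ZMod.val_one_eq_one_mod k
    have h1k : 1 % k = 1 := Nat.mod_eq_of_lt (by omega)
    simp [this, h1k]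

/-- Existence of a maximal element of a nonempty set under an agent's preference. -/
lemma exists_max {N : Type} [Fintype N] (H : Market N) (a : N) (A : Set N)
    (hA : A.Nonempty) : ∃ b ∈ A, ∀ c ∈ A, ¬ H.pref a c b := by
  haveI : IsTrans N (fun x y => H.pref a x y) := ⟨fun x y z => H.trans a x y z⟩
  haveI : IsIrrefl N (fun x y => H.pref a x y) := ⟨fun x => H.irrefl a x⟩
  have wf : WellFounded (fun x y => H.pref a x y) :=
    Finite.wellFounded_of_trans_of_irrefl _
  obtain ⟨b, hb, hmin⟩ := wf.has_min A hA
  exact ⟨b, hb, fun c hc => hmin c hc⟩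

/-- The key lemma: in the strong core, agents of an absorbing set of the
undominated digraph receive undominated houses. -/
lemma key_undominated {N : Type} [Fintype N] (H : Market N) (X : N → N)
    (hX : H.InStrongCore X) (S : Set N) (hS : IsAbsorbing H.undominated S) :
    ∀ a ∈ S, (a, X a) ∈ H.undominated := by
  intro a ha
  by_contra hnd
  have hE : (a, X a) ∈ H.E := hX.1.2 a
  have hexists : ∃ b', H.acceptable a b' ∧ H.pref a b' (X a) := by
    by_contra hno
    push_neg at hno
    exact hnd ⟨hE, fun b' hb' => hno b' hb'⟩
  obtain ⟨b', hb'acc, hb'⟩ := hexists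
  obtain ⟨g, ⟨hgacc, hg⟩, hgmax⟩ :=
    exists_max H a {b | H.acceptable a b ∧ H.pref a b (X a)} ⟨b', hb'acc, hb'⟩
  have hgU : (a, g) ∈ H.undominated :=
    ⟨hgacc, fun c hcacc hc => hgmax c ⟨hcacc, H.trans a c g (X a) hc hg⟩ hc⟩
  have hgS : g ∈ S := hS.2 (a, g) hgU ha
  have hga : g ≠ a := by
    intro h
    rw [h] at hg
    exact hX.1.2 a hg
  have hreach : reach H.undominated g a := hS.1.2.1 g hgS a ha
  obtain ⟨l, hch, hnodup⟩ := nodup_path hreach hga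
  -- the cyclic list
  set L : List N := a :: g :: l with hL
  have hlen : 2 ≤ L.length := by simp [hL]
  have hnodupL : L.Nodup := by
    have : (g :: l ++ [a]).Nodup := hnodup
    rw [List.nodup_append] at this
    obtain ⟨h1, _, h3⟩ := this
    rw [hL, List.nodup_cons]
    refine ⟨?_, h1⟩
    intro hmem
    exact h3 _ hmem _ (by simp) rfl
  have hhead : L.head (by simp [hL]) = a := by simp [hL]
  have harc : List.Chain' (fun u v => (u, v) ∈ H.undominated)
      (L ++ [L.head (by simp [hL])]) := by
    rw [hhead]
    have : L ++ [a] = a :: (g :: l ++ [a]) := by simp [hL]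
    rw [this, List.Chain', List.isChain_cons]
    exact ⟨fun y hy => by simp at hy; rwa [← hy], hch⟩
  obtain ⟨k, c, hk0, hinj, harcs, hc0, hc1⟩ :=
    zmod_cycle H.undominated L hlen hnodupL harc
  have hc0' : c 0 = a := by rw [hc0]; simp [hL]
  have hc1' : c 1 = g := by rw [hc1]; simp [hL]
  -- weak improvement on every undominated arc
  have hweak : ∀ i, ¬ H.pref (c i) (X (c i)) (c (i + 1)) := fun i =>
    (harcs i).2 (X (c i)) (hX.1.2 (c i))
  apply hX.2
  refine ⟨k, c, ⟨hk0, hinj, fun i => (harcs i).1⟩, hweak, 0, ?_⟩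
  rw [zero_add, hc0', hc1']
  exact hg

end Aux

theorem stmt8 {N : Type} [Fintype N] (H : Market N) (X : N → N)
    (hX : H.InStrongCore X) (S : Set N)
    (hS : IsAbsorbing H.undominated S) :
    (H.IsAllocationOn S (graphRestrict X S) ∧ graphRestrict X S ⊆ H.undominated) ∧
    H.InStrongCoreOn Sᶜ (graphRestrict X Sᶜ) := by
  -- X sends S into S and is undominated there
  have key := key_undominated H X hX S hS
  have hmapS : ∀ a ∈ S, X a ∈ S := fun a ha => hS.2 (a, X a) (key a ha) ha
  have hinj : Function.Injective X := hX.1.1.1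
  have hsurj : Function.Surjective X := hX.1.1.2
  have himg : X '' S = S := by
    apply Set.eq_of_subset_of_ncard_le
    · rintro _ ⟨s, hs, rfl⟩; exact hmapS s hs
    · rw [Set.ncard_image_of_injective S hinj]
    · exact Set.toFinite S
  have hmapSc : ∀ a ∈ Sᶜ, X a ∈ Sᶜ := by
    intro a ha hXa
    rw [← himg] at hXa
    obtain ⟨s, hs, hXs⟩ := hXa
    exact ha (hinj hXs ▸ hs)
  have hpreS : ∀ a, X a ∈ S → a ∈ S := by
    intro a hXa
    by_contra h
    exact hmapSc a h hXa
  have hpreSc : ∀ a, X a ∈ Sᶜ → a ∈ Sᶜ := by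
    intro a hXa h
    exact hXa (hmapS a h)
  have halloc : ∀ (T : Set N), (∀ a ∈ T, X a ∈ T) → (∀ a, X a ∈ T → a ∈ T) →
      H.IsAllocationOn T (graphRestrict X T) := by
    intro T hmap hpre
    refine ⟨?_, ?_, ?_, ?_⟩
    · rintro ⟨u, v⟩ ⟨h1, h2⟩
      have : v = X u := h2
      rw [Market.E, Set.mem_setOf_eq]
      simp only
      rw [this]
      exact hX.1.2 u
    · rintro ⟨u, v⟩ ⟨h1, h2⟩
      exact ⟨h1, by rw [show v = X u from h2]; exact hmap u h1⟩
    · intro u hu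
      exact ⟨X u, ⟨hu, rfl⟩, fun b hb => hb.2⟩
    · intro v hv
      obtain ⟨u, hu⟩ := hsurj v
      refine ⟨u, ⟨hpre u (hu ▸ hv), hu.symm⟩, ?_⟩
      rintro u' ⟨hu'1, hu'2⟩
      exact hinj (by rw [← hu'2, hu])
  refine ⟨⟨halloc S hmapS hpreS, ?_⟩, halloc Sᶜ hmapSc hpreSc, ?_⟩
  · rintro ⟨u, v⟩ ⟨h1, h2⟩
    have := key u h1
    rwa [show ((u, v) : N × N) = (u, X u) from Prod.ext rfl h2]
  · rintro ⟨k, c, hcyc, hmem, hweak, i, b, hb, hstrict⟩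
    have hbX : b = X (c i) := hb.2
    apply hX.2
    refine ⟨k, c, hcyc, ?_, i, ?_⟩
    · intro j
      exact hweak j (X (c j)) ⟨hmem j, rfl⟩
    · rwa [hbX] at hstrict
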